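/- arXiv:1601.05015 — 4 statements merged into one kernel-verified Lean document; each statement's English description precedes it below -/
import Mathlib

section
/- Let a, b, h be real numbers with h ≥ 0, b(7a+10b) ≠ 0, and |2(9a² − 10ab − 4b²)| < |b(7a+10b)|. Let α* be a real number with cos(2α*) = 2(9a² − 10ab − 4b²)/(b(7a+10b)). Then f21(√(2h), α*) = 0 and f22(√(2h), α*) = 0. -/
/-- The first component of the second-order averaged function of the harmonic
oscillator perturbed by the quintic potential `(a/5)x⁵ + bx³y²` at energy `h`. -/
noncomputable def f21 (a b h r α : ℝ) : ℝ :=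
  (1 / 320) * b * r ^ 3 * (r ^ 2 - 2 * h) * Real.sin (2 * α) *
    (-240 * b * h + (-49 * a + 50 * b) * r ^ 2 +
      90 * b * (r ^ 2 - 2 * h) * Real.cos (2 * α))

/-- The second component of the second-order averaged function of the harmonic
oscillator perturbed by the quintic potential `(a/5)x⁵ + bx³y²` at energy `h`. -/
noncomputable def f22 (a b h r α : ℝ) : ℝ :=
  (1 / 160) * r ^ 2 *
    (564 * b ^ 2 * h ^ 2 + 420 * a * b * h * r ^ 2 - 678 * b ^ 2 * h * r ^ 2 +
      63 * a ^ 2 * r ^ 4 - 280 * a * b * r ^ 4 + 170 * b ^ 2 * r ^ 4 +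
      b * (49 * a * r ^ 2 * (3 * h - 2 * r ^ 2) +
        10 * b * (48 * h ^ 2 - 51 * h * r ^ 2 + 10 * r ^ 4)) * Real.cos (2 * α) +
      45 * b ^ 2 * (2 * h ^ 2 - 3 * h * r ^ 2 + r ^ 4) * Real.cos (4 * α))

/-- If `|2(9a² − 10ab − 4b²)| < |b(7a+10b)|` and `cos(2α*)` equals
`2(9a² − 10ab − 4b²)/(b(7a+10b))`, then `(√(2h), α*)` is a zero of `(f21, f22)`. -/
theorem zero_on_circle_r_sqrt_two_h (a b h α : ℝ) (hh : 0 ≤ h)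
    (hb : b * (7 * a + 10 * b) ≠ 0)
    (hlt : |2 * (9 * a ^ 2 - 10 * a * b - 4 * b ^ 2)| < |b * (7 * a + 10 * b)|)
    (hα : Real.cos (2 * α) =
      2 * (9 * a ^ 2 - 10 * a * b - 4 * b ^ 2) / (b * (7 * a + 10 * b))) :
    f21 a b h (Real.sqrt (2 * h)) α = 0 ∧ f22 a b h (Real.sqrt (2 * h)) α = 0 := by
  have hr : Real.sqrt (2 * h) ^ 2 = 2 * h := Real.sq_sqrt (by linarith)
  have h4 : Real.sqrt (2 * h) ^ 4 = 4 * h ^ 2 := by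
    rw [show Real.sqrt (2 * h) ^ 4 = (Real.sqrt (2 * h) ^ 2) ^ 2 by ring, hr]; ring
  have key : b * (7 * a + 10 * b) * Real.cos (2 * α) =
      2 * (9 * a ^ 2 - 10 * a * b - 4 * b ^ 2) := by
    rw [hα, mul_div_assoc', mul_div_right_comm, div_self hb, one_mul]
  constructor
  · unfold f21; rw [hr]; ring
  · unfold f22
    rw [show (4 : ℝ) * α = 2 * (2 * α) by ring, Real.cos_two_mul (2 * α), h4, hr]
    linear_combination (-(7 / 40) * h ^ 3) * key
end

section
/- Let a, b, h, r be real numbers with b − a ≠ 0 and r² = 3bh/(b−a). Then f21(r, 0) = 0, f22(r, 0) = 0, f21(r, π) = 0 and f22(r, π) = 0. -/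
/-- If `r² = 3bh/(b−a)`, then `(r, 0)` and `(r, π)` are zeros of `(f21, f22)`. -/
theorem zero_of_type_two (a b h r : ℝ) (hba : b - a ≠ 0)
    (hr : r ^ 2 = 3 * b * h / (b - a)) :
    f21 a b h r 0 = 0 ∧ f22 a b h r 0 = 0 ∧
    f21 a b h r Real.pi = 0 ∧ f22 a b h r Real.pi = 0 := by
  have key : (b - a) * r ^ 2 = 3 * b * h := by
    field_simp at hr; linarith [hr]
  have h2 : (2 : ℝ) * Real.pi = 2 * Real.pi := rfl
  have s0 : Real.sin (2 * 0) = 0 := by norm_num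
  have sπ : Real.sin (2 * Real.pi) = 0 := by
    rw [Real.sin_two_pi]
  have c20 : Real.cos (2 * 0) = 1 := by norm_num
  have c40 : Real.cos (4 * 0) = 1 := by norm_num
  have c2π : Real.cos (2 * Real.pi) = 1 := Real.cos_two_pi
  have c4π : Real.cos (4 * Real.pi) = 1 := by
    have : (4 : ℝ) * Real.pi = 2 * Real.pi + 2 * Real.pi := by ring
    rw [this, Real.cos_add, Real.sin_two_pi, Real.cos_two_pi]; ring
  refine ⟨?_, ?_, ?_, ?_⟩
  · simp [f21, s0]
  · rw [f22, c20, c40]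
    linear_combination (1 / 160 * r ^ 2 * (63 * (5 * b - a) * r ^ 2 - 378 * b * h)) * key
  · simp [f21, sπ]
  · rw [f22, c2π, c4π]
    linear_combination (1 / 160 * r ^ 2 * (63 * (5 * b - a) * r ^ 2 - 378 * b * h)) * key
end

section
/- Let a, b, h, r be real numbers with 5b − a ≠ 0 and r² = 6bh/(5b−a). Then f21(r, 0) = 0, f22(r, 0) = 0, f21(r, π) = 0 and f22(r, π) = 0. -/
/-- If `r² = 6bh/(5b−a)`, then `(r, 0)` and `(r, π)` are zeros of `(f21, f22)`. -/
theorem zero_of_type_three (a b h r : ℝ) (hba : 5 * b - a ≠ 0)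
    (hr : r ^ 2 = 6 * b * h / (5 * b - a)) :
    f21 a b h r 0 = 0 ∧ f22 a b h r 0 = 0 ∧
    f21 a b h r Real.pi = 0 ∧ f22 a b h r Real.pi = 0 := by
  have hs : r ^ 2 * (5 * b - a) = 6 * b * h := by
    rw [hr, div_mul_cancel₀ _ hba]
  have c2 : Real.cos (2 * Real.pi) = 1 := Real.cos_two_pi
  have c4 : Real.cos (4 * Real.pi) = 1 := by
    rw [show (4 : ℝ) * Real.pi = 2 * Real.pi + 2 * Real.pi by ring, Real.cos_add, c2,
      Real.sin_two_pi]
    ring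
  have s2 : Real.sin (2 * Real.pi) = 0 := Real.sin_two_pi
  refine ⟨by simp [f21], ?_, by simp [f21, s2], ?_⟩ <;>
  · simp only [f22, mul_zero, Real.cos_zero, c2, c4]
    linear_combination (1 / 160 * r ^ 2 * ((-63 * a + 63 * b) * r ^ 2 - 189 * b * h)) * hs
end

section
/- Let a, b, h, r be real numbers with 5b − a ≠ 0 and r² = 6bh/(5b−a). Then ∂f21/∂α (r, 0) = (63/40)·b²·h²·(a−2b)·(a−10b)·r³/(5b−a)², ∂f22/∂r (r, 0) = −(567/40)·r·b²·h²·(a+3b)/(5b−a), and the Jacobian determinant satisfies J(r, 0) = (35721/1600)·b⁴·h⁴·(a−2b)·(a−10b)·(a+3b)·r⁴/(5b−a)³. In particular, if h > 0, r > 0 and b·(a−2b)·(a−10b)·(a+3b) ≠ 0, then J(r, 0) ≠ 0. -/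
/-- The Jacobian determinant of `(f21, f22)` with respect to `(r, α)`. -/
noncomputable def Jac (a b h r α : ℝ) : ℝ :=
  deriv (fun r' => f21 a b h r' α) r * deriv (fun α' => f22 a b h r α') α -
    deriv (fun α' => f21 a b h r α') α * deriv (fun r' => f22 a b h r' α) r

lemma hs0 : HasDerivAt (fun α' : ℝ => Real.sin (2 * α')) 2 0 := by
  simpa [Function.comp_def] using (Real.hasDerivAt_sin (2 * (0:ℝ))).comp 0 ((hasDerivAt_id (0:ℝ)).const_mul 2)

lemma hc0 : HasDerivAt (fun α' : ℝ => Real.cos (2 * α')) 0 0 := by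
  simpa [Function.comp_def] using (Real.hasDerivAt_cos (2 * (0:ℝ))).comp 0 ((hasDerivAt_id (0:ℝ)).const_mul 2)

lemma hc4 : HasDerivAt (fun α' : ℝ => Real.cos (4 * α')) 0 0 := by
  simpa [Function.comp_def] using (Real.hasDerivAt_cos (4 * (0:ℝ))).comp 0 ((hasDerivAt_id (0:ℝ)).const_mul 4)

lemma deriv_f21_alpha (a b h r : ℝ) :
    deriv (fun α' => f21 a b h r α') 0 =
      (1/320) * b * r ^ 3 * (r ^ 2 - 2 * h) * 2 *
        (-240 * b * h + (-49 * a + 50 * b) * r ^ 2 + 90 * b * (r ^ 2 - 2 * h)) := by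
  have hfun : (fun α' => f21 a b h r α') =
      (fun α' => ((1/320) * b * r ^ 3 * (r ^ 2 - 2 * h)) * Real.sin (2 * α') *
        ((-240 * b * h + (-49 * a + 50 * b) * r ^ 2) +
          (90 * b * (r ^ 2 - 2 * h)) * Real.cos (2 * α'))) := by
    funext α'; simp only [f21]
  have H := (hs0.const_mul ((1/320) * b * r ^ 3 * (r ^ 2 - 2 * h))).mul
    ((hc0.const_mul (90 * b * (r ^ 2 - 2 * h))).const_add
      ((-240 * b * h + (-49 * a + 50 * b) * r ^ 2)))
  rw [hfun]
  have H2 := H.deriv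
  simp only [Pi.mul_def, Pi.add_def] at H2
  rw [H2]
  simp [Real.sin_zero, Real.cos_zero]

lemma deriv_f22_r (a b h r : ℝ) :
    deriv (fun r' => f22 a b h r' 0) r =
      (1/160) * (2 * (1134 * b ^ 2 * h ^ 2) * r +
        4 * (567 * a * b * h - 1323 * b ^ 2 * h) * r ^ 3 +
        6 * (63 * a ^ 2 - 378 * a * b + 315 * b ^ 2) * r ^ 5) := by
  have hfun : (fun r' => f22 a b h r' 0) =
      (fun r' : ℝ => ((1134 * b ^ 2 * h ^ 2) / 160) * r' ^ 2 +
        (((567 * a * b * h - 1323 * b ^ 2 * h)) / 160) * r' ^ 4 +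
        (((63 * a ^ 2 - 378 * a * b + 315 * b ^ 2)) / 160) * r' ^ 6) := by
    funext r'; simp [f22]; ring
  have H := (((hasDerivAt_pow 2 r).const_mul ((1134 * b ^ 2 * h ^ 2) / 160)).add
      ((hasDerivAt_pow 4 r).const_mul (((567 * a * b * h - 1323 * b ^ 2 * h)) / 160))).add
      ((hasDerivAt_pow 6 r).const_mul (((63 * a ^ 2 - 378 * a * b + 315 * b ^ 2)) / 160))
  have H2 := H.deriv
  simp only [Pi.mul_def, Pi.add_def] at H2
  rw [hfun, H2]
  push_cast
  ring

lemma deriv_f21_r (a b h r : ℝ) : deriv (fun r' => f21 a b h r' 0) r = 0 := by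
  have hfun : (fun r' => f21 a b h r' 0) = (fun _ : ℝ => (0:ℝ)) := by
    funext r'; simp [f21]
  rw [hfun, deriv_const]

lemma deriv_f22_alpha (a b h r : ℝ) : deriv (fun α' => f22 a b h r α') 0 = 0 := by
  have hfun : (fun α' => f22 a b h r α') =
      (fun α' => ((1/160) * r ^ 2 * (564 * b ^ 2 * h ^ 2 + 420 * a * b * h * r ^ 2
          - 678 * b ^ 2 * h * r ^ 2 + 63 * a ^ 2 * r ^ 4 - 280 * a * b * r ^ 4
          + 170 * b ^ 2 * r ^ 4)) +
        (((1/160) * r ^ 2 * (b * (49 * a * r ^ 2 * (3 * h - 2 * r ^ 2) +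
            10 * b * (48 * h ^ 2 - 51 * h * r ^ 2 + 10 * r ^ 4)))) * Real.cos (2 * α') +
          ((1/160) * r ^ 2 * (45 * b ^ 2 * (2 * h ^ 2 - 3 * h * r ^ 2 + r ^ 4))) *
            Real.cos (4 * α'))) := by
    funext α'; simp only [f22]; ring
  have H := ((hc0.const_mul ((1/160) * r ^ 2 * (b * (49 * a * r ^ 2 * (3 * h - 2 * r ^ 2) +
      10 * b * (48 * h ^ 2 - 51 * h * r ^ 2 + 10 * r ^ 4))))).add
      (hc4.const_mul ((1/160) * r ^ 2 * (45 * b ^ 2 * (2 * h ^ 2 - 3 * h * r ^ 2 + r ^ 4))))).const_add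
      ((1/160) * r ^ 2 * (564 * b ^ 2 * h ^ 2 + 420 * a * b * h * r ^ 2
          - 678 * b ^ 2 * h * r ^ 2 + 63 * a ^ 2 * r ^ 4 - 280 * a * b * r ^ 4
          + 170 * b ^ 2 * r ^ 4))
  have H2 := H.deriv
  simp only [Pi.mul_def, Pi.add_def] at H2
  rw [hfun, H2]
  ring

/-- Off-diagonal Jacobian entries and Jacobian determinant at the zero of type
(3), where `r² = 6bh/(5b−a)` and `α = 0`; the determinant is nonzero when
`h > 0`, `r > 0` and `b(a−2b)(a−10b)(a+3b) ≠ 0`. -/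
theorem jacobian_at_type_three (a b h r : ℝ) (hba : 5 * b - a ≠ 0)
    (hr : r ^ 2 = 6 * b * h / (5 * b - a)) :
    deriv (fun α' => f21 a b h r α') 0 =
      (63 / 40) * b ^ 2 * h ^ 2 * (a - 2 * b) * (a - 10 * b) * r ^ 3 /
        (5 * b - a) ^ 2 ∧
    deriv (fun r' => f22 a b h r' 0) r =
      -(567 / 40) * r * b ^ 2 * h ^ 2 * (a + 3 * b) / (5 * b - a) ∧
    Jac a b h r 0 =
      (35721 / 1600) * b ^ 4 * h ^ 4 * (a - 2 * b) * (a - 10 * b) * (a + 3 * b) *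
        r ^ 4 / (5 * b - a) ^ 3 ∧
    (0 < h → 0 < r → b * (a - 2 * b) * (a - 10 * b) * (a + 3 * b) ≠ 0 →
      Jac a b h r 0 ≠ 0) := by
  rw [eq_div_iff hba] at hr
  have h2 : r ^ 2 * (5 * b - a) = 6 * b * h := hr
  have e1 : deriv (fun α' => f21 a b h r α') 0 =
      (63 / 40) * b ^ 2 * h ^ 2 * (a - 2 * b) * (a - 10 * b) * r ^ 3 /
        (5 * b - a) ^ 2 := by
    rw [deriv_f21_alpha, eq_div_iff (pow_ne_zero 2 hba)]
    linear_combination (35/8*b^3*r^5 - 133/8*b^3*h*r^3 - 77/32*a*b^2*r^5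
      + 28/5*a*b^2*h*r^3 + 49/160*a^2*b*r^5 - 49/80*a^2*b*h*r^3) * h2
  have e2 : deriv (fun r' => f22 a b h r' 0) r =
      -(567 / 40) * r * b ^ 2 * h ^ 2 * (a + 3 * b) / (5 * b - a) := by
    rw [deriv_f22_r, eq_div_iff hba]
    linear_combination (189/16*b^2*r^3 - 189/10*b^2*h*r - 567/40*a*b*r^3
      + 189/80*a^2*r^3) * h2
  have e3 : Jac a b h r 0 =
      (35721 / 1600) * b ^ 4 * h ^ 4 * (a - 2 * b) * (a - 10 * b) * (a + 3 * b) *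
        r ^ 4 / (5 * b - a) ^ 3 := by
    rw [Jac, deriv_f21_r, deriv_f22_alpha, deriv_f21_alpha, deriv_f22_r,
      eq_div_iff (pow_ne_zero 3 hba)]
    linear_combination (-33075/128*b^6*r^10 + 218295/128*b^6*h*r^8
      - 109809/32*b^6*h^2*r^6 + 567567/320*b^6*h^3*r^4 + 257985/512*a*b^5*r^10
      - 654885/256*a*b^5*h*r^8 + 4552443/1280*a*b^5*h^2*r^6
      - 1583631/1600*a*b^5*h^3*r^4 - 1323/4*a^2*b^4*r^10
      + 414099/320*a^2*b^4*h*r^8 - 4274613/3200*a^2*b^4*h^2*r^6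
      + 488187/3200*a^2*b^4*h^3*r^4 + 25137/256*a^3*b^3*r^10
      - 964467/3200*a^3*b^3*h*r^8 + 1371951/6400*a^3*b^3*h^2*r^6
      - 27783/3200*a^3*b^3*h^3*r^4 - 43659/3200*a^4*b^2*r^10
      + 107163/3200*a^4*b^2*h*r^8 - 3969/320*a^4*b^2*h^2*r^6
      + 9261/12800*a^5*b*r^10 - 9261/6400*a^5*b*h*r^8) * h2
  refine ⟨e1, e2, e3, ?_⟩
  intro hh hrpos hne
  rw [e3]
  simp only [mul_ne_zero_iff] at hne
  obtain ⟨⟨⟨hb, hf1⟩, hf2⟩, hf3⟩ := hne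
  refine div_ne_zero ?_ (pow_ne_zero _ hba)
  exact mul_ne_zero (mul_ne_zero (mul_ne_zero (mul_ne_zero (mul_ne_zero
    (mul_ne_zero (by norm_num) (pow_ne_zero _ hb)) (pow_ne_zero _ hh.ne'))
    hf1) hf2) hf3) (pow_ne_zero _ hrpos.ne')
end
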